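/- A nonlinear contact curve in P³ is nondegenerate: if β is a nondegenerate alternating bilinear form on ℂ⁴ and F : Fin 4 → ℂ[X] satisfies the contact condition Σ_{0≤i<j≤3} β(e_i,e_j)·(F_i·F_j' − F_j·F_i') = 0, and the components F₀, F₁, F₂, F₃ span a ℂ-subspace of ℂ[X] of dimension at least 3, then F₀, F₁, F₂, F₃ are linearly independent over ℂ. -/

import Mathlib

open Polynomial Matrix

/-- The minor `W_ij = F_i·F_j' − F_j·F_i'` of a curve `F : Fin 4 → ℂ[X]`. -/
noncomputable def minor4 (F : Fin 4 → ℂ[X]) (i j : Fin 4) : ℂ[X] :=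
  F i * derivative (F j) - F j * derivative (F i)

/-- `F` is a contact curve for the alternating bilinear form with matrix `B`:
`Σ_{0 ≤ i < j ≤ 3} β(e_i,e_j)·W_ij = 0`. -/
noncomputable def IsContactCurve (B : Matrix (Fin 4) (Fin 4) ℂ) (F : Fin 4 → ℂ[X]) : Prop :=
  ∑ p ∈ Finset.univ.filter (fun p : Fin 4 × Fin 4 => p.1 < p.2),
    C (B p.1 p.2) * minor4 F p.1 p.2 = 0

-- Wronskian degeneracy lemma
lemma wronskian_zero_dep {p q : ℂ[X]} (h : wronskian p q = 0) :
    ∃ s t : ℂ, (s ≠ 0 ∨ t ≠ 0) ∧ C s * p + C t * q = 0 := by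
  rcases eq_or_ne q 0 with rfl | hq
  · exact ⟨0, 1, Or.inr one_ne_zero, by simp⟩
  · set d := GCDMonoid.gcd p q with hd
    have hdq : d ∣ q := gcd_dvd_right p q
    have hdp : d ∣ p := gcd_dvd_left p q
    have hd0 : d ≠ 0 := fun h0 => hq (by simpa [h0] using hdq)
    have hp1 : p = d * (p / d) := (EuclideanDomain.mul_div_cancel' hd0 hdp).symm
    have hq1 : q = d * (q / d) := (EuclideanDomain.mul_div_cancel' hd0 hdq).symm
    have hcop : IsCoprime (p / d) (q / d) := isCoprime_div_gcd_div_gcd hq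
    have hw : wronskian (p / d) (q / d) = 0 := by
      have : d * d * wronskian (p / d) (q / d) = 0 := by
        rw [← h]
        conv_rhs => rw [hp1, hq1]
        simp only [wronskian, derivative_mul]
        ring
      have := mul_eq_zero.mp this
      rcases this with h1 | h2
      · exact absurd (mul_eq_zero.mp h1) (by rintro (h | h) <;> exact hd0 h)
      · exact h2
    obtain ⟨hdp', hdq'⟩ := hcop.wronskian_eq_zero_iff.mp hw
    obtain ⟨α, hα⟩ : ∃ α, p / d = C α := ⟨_, eq_C_of_derivative_eq_zero hdp'⟩
    obtain ⟨β, hβ⟩ : ∃ β, q / d = C β := ⟨_, eq_C_of_derivative_eq_zero hdq'⟩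
    refine ⟨β, -α, Or.inl ?_, ?_⟩
    · intro h0
      apply hq; rw [hq1, hβ, h0]; simp
    · rw [hp1, hq1, hα, hβ]; push_cast [map_neg]; ring



noncomputable def gvec (F : Fin 4 → ℂ[X]) (x : Fin 4 → ℂ) : ℂ[X] :=
  ∑ i, C (x i) * F i

lemma contact_expand (B : Matrix (Fin 4) (Fin 4) ℂ) (F : Fin 4 → ℂ[X])
    (c a u w : Fin 4 → ℂ)
    (hB : ∀ i j, B i j = -(c i * a j - a i * c j + u i * w j - w i * u j)) :
    ∑ p ∈ Finset.univ.filter (fun p : Fin 4 × Fin 4 => p.1 < p.2),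
      C (B p.1 p.2) * minor4 F p.1 p.2 =
    -(wronskian (gvec F c) (gvec F a) + wronskian (gvec F u) (gvec F w)) := by
  rw [Finset.sum_filter]
  rw [Fintype.sum_prod_type]
  simp only [Fin.sum_univ_four, minor4, gvec, wronskian, hB,
    show ((0:Fin 4) < 1) = True by decide, show ((0:Fin 4) < 2) = True by decide,
    show ((0:Fin 4) < 3) = True by decide, show ((1:Fin 4) < 2) = True by decide,
    show ((1:Fin 4) < 3) = True by decide, show ((2:Fin 4) < 3) = True by decide,
    show ((0:Fin 4) < 0) = False by decide, show ((1:Fin 4) < 0) = False by decide,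
    show ((1:Fin 4) < 1) = False by decide, show ((2:Fin 4) < 0) = False by decide,
    show ((2:Fin 4) < 1) = False by decide, show ((2:Fin 4) < 2) = False by decide,
    show ((3:Fin 4) < 0) = False by decide, show ((3:Fin 4) < 1) = False by decide,
    show ((3:Fin 4) < 2) = False by decide, show ((3:Fin 4) < 3) = False by decide,
    if_true, if_false, derivative_add, derivative_C_mul, map_neg, map_sub, map_add,
    _root_.map_mul]
  ring


lemma exists_decomp (B : Matrix (Fin 4) (Fin 4) ℂ) (halt : Bᵀ = -B) (hdet : B.det ≠ 0)
    (c : Fin 4 → ℂ) (hc : c ≠ 0) :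
    ∃ a u w : Fin 4 → ℂ,
      (∀ i j, B i j = -(c i * a j - a i * c j + u i * w j - w i * u j)) ∧
      (∀ x : Fin 4 → ℂ, ∃ y : Fin 4 → ℂ,
        ∀ j, x j = y 0 * c j + y 1 * a j + y 2 * u j + y 3 * w j) := by
  have hBdetU : IsUnit B.det := isUnit_iff_ne_zero.mpr hdet
  set A := B⁻¹ with hA
  have hAdet : A.det ≠ 0 := by
    rw [hA, Matrix.det_nonsing_inv]
    simpa [Ring.inverse_eq_inv'] using inv_ne_zero hdet
  have hAdetU : IsUnit A.det := isUnit_iff_ne_zero.mpr hAdet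
  have hAT : Aᵀ = -A := by
    rw [hA, Matrix.transpose_nonsing_inv, halt]
    exact Matrix.inv_eq_left_inv (by rw [neg_mul_neg, Matrix.nonsing_inv_mul B hBdetU])
  -- the bilinear form γ x y = x ⬝ᵥ A *ᵥ y
  set γ : (Fin 4 → ℂ) → (Fin 4 → ℂ) → ℂ := fun x y => x ⬝ᵥ A *ᵥ y with hγ
  have γeq : ∀ x y, γ x y = x ⬝ᵥ A *ᵥ y := fun _ _ => rfl
  have γanti : ∀ x y, γ x y = -γ y x := by
    intro x y
    rw [γeq, γeq, Matrix.dotProduct_mulVec, ← Matrix.transpose_transpose A,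
      Matrix.vecMul_transpose, Matrix.transpose_transpose, hAT, Matrix.neg_mulVec,
      neg_dotProduct, dotProduct_comm]
  have γself : ∀ x, γ x x = 0 := by
    intro x
    have := γanti x x
    exact add_self_eq_zero.mp (eq_neg_iff_add_eq_zero.mp this)
  have γadd : ∀ x y z, γ x (y + z) = γ x y + γ x z := by
    intro x y z; rw [γeq, γeq, γeq, Matrix.mulVec_add, dotProduct_add]
  have γsmul : ∀ (s : ℂ) x y, γ x (s • y) = s * γ x y := by
    intro s x y; rw [γeq, γeq, Matrix.mulVec_smul, dotProduct_smul, smul_eq_mul]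
  -- nondegeneracy
  have nondeg : ∀ x : Fin 4 → ℂ, x ≠ 0 → ∃ k, Matrix.vecMul x A k ≠ 0 := by
    intro x hx
    by_contra h
    push_neg at h
    apply hx
    have h0 : Matrix.vecMul x A = 0 := funext h
    have := congrArg (fun v => Matrix.vecMul v A⁻¹) h0
    simpa [Matrix.vecMul_vecMul, Matrix.mul_nonsing_inv A hAdetU] using this
  have γdot : ∀ x y, γ x y = Matrix.vecMul x A ⬝ᵥ y := by
    intro x y; rw [γeq, Matrix.dotProduct_mulVec]
  -- construct a
  obtain ⟨k, hk⟩ := nondeg c hc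
  set a : Fin 4 → ℂ := (Matrix.vecMul c A k)⁻¹ • (Pi.single k 1 : Fin 4 → ℂ) with ha
  have γca : γ c a = 1 := by
    rw [ha, γsmul, γdot, dotProduct_single, mul_one, inv_mul_cancel₀ hk]
  -- construct u: nonzero vector 'orthogonal' to c and a
  set M2 : Matrix (Fin 2) (Fin 4) ℂ := Matrix.of ![Matrix.vecMul c A, Matrix.vecMul a A] with hM2
  have hker : (LinearMap.ker M2.mulVecLin) ≠ ⊥ := by
    intro hbot
    have hinj : Function.Injective M2.mulVecLin := by
      rw [← LinearMap.ker_eq_bot]; exact hbot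
    have h1 := LinearMap.finrank_le_finrank_of_injective hinj
    simp [Module.finrank_pi] at h1
  obtain ⟨u, hu_mem, hu0⟩ := (Submodule.ne_bot_iff _).mp hker
  have hMu : M2.mulVecLin u = 0 := hu_mem
  have γcu : γ c u = 0 := by
    have := congrFun hMu 0
    simpa [hM2, Matrix.mulVecLin_apply, Matrix.mulVec, γdot] using this
  have γau : γ a u = 0 := by
    have := congrFun hMu 1
    simpa [hM2, Matrix.mulVecLin_apply, Matrix.mulVec, γdot] using this
  -- construct w
  obtain ⟨k', hk'⟩ := nondeg u hu0
  set x : Fin 4 → ℂ := (Pi.single k' 1 : Fin 4 → ℂ) with hx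
  have γux : γ u x = Matrix.vecMul u A k' := by
    rw [hx, γdot, dotProduct_single, mul_one]
  set w0 : Fin 4 → ℂ := x + γ a x • c + (-(γ c x)) • a with hw0
  have γuc : γ u c = 0 := by rw [γanti, γcu, neg_zero]
  have γua : γ u a = 0 := by rw [γanti, γau, neg_zero]
  have γac : γ a c = -1 := by rw [γanti, γca]
  have γcw0 : γ c w0 = 0 := by
    rw [hw0, γadd, γadd, γsmul, γsmul, γself, γca]
    ring
  have γaw0 : γ a w0 = 0 := by
    rw [hw0, γadd, γadd, γsmul, γsmul, γself, γac]
    ring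
  have γuw0 : γ u w0 ≠ 0 := by
    rw [hw0, γadd, γadd, γsmul, γsmul, γuc, γua, γux]
    simpa using hk'
  set w : Fin 4 → ℂ := (γ u w0)⁻¹ • w0 with hw
  have γcw : γ c w = 0 := by rw [hw, γsmul, γcw0, mul_zero]
  have γaw : γ a w = 0 := by rw [hw, γsmul, γaw0, mul_zero]
  have γuw : γ u w = 1 := by rw [hw, γsmul, inv_mul_cancel₀ γuw0]
  -- antisymmetric companions
  have γwc : γ w c = 0 := by rw [γanti, γcw, neg_zero]
  have γwa : γ w a = 0 := by rw [γanti, γaw, neg_zero]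
  have γwu : γ w u = -1 := by rw [γanti, γuw]
  -- matrix of basis columns
  set P : Matrix (Fin 4) (Fin 4) ℂ := Matrix.of (fun i k => ![c, a, u, w] k i) with hP
  set J4 : Matrix (Fin 4) (Fin 4) ℂ :=
    !![0,1,0,0; -1,0,0,0; 0,0,0,1; 0,0,-1,0] with hJ4
  have hPAP : Pᵀ * A * P = J4 := by
    ext i j
    have hentry : (Pᵀ * A * P) i j = γ (![c, a, u, w] i) (![c, a, u, w] j) := by
      rw [γeq, Matrix.mul_apply]
      simp only [Matrix.mul_apply, Matrix.transpose_apply, hP, Matrix.of_apply,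
        dotProduct, Matrix.mulVec, Finset.mul_sum, Finset.sum_mul]
      rw [Finset.sum_comm]
      apply Finset.sum_congr rfl
      intro k _
      apply Finset.sum_congr rfl
      intro l _
      ring
    rw [hentry]
    fin_cases i <;> fin_cases j <;>
      simp [γself, γca, γac, γcu, γuc, γau, γua, γcw, γwc, γaw, γwa, γuw, γwu, hJ4,
        Matrix.vecHead, Matrix.vecTail]
  have hJJ : J4 * J4 = -1 := by
    ext i j
    fin_cases i <;> fin_cases j <;>
      simp [hJ4, Matrix.mul_apply, Fin.sum_univ_four, Matrix.one_apply,
        Matrix.vecHead, Matrix.vecTail]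
  have hdJ : J4.det ≠ 0 := by
    intro h0
    have h1 : J4.det * J4.det = 1 := by
      rw [← Matrix.det_mul, hJJ]
      rw [show (-1 : Matrix (Fin 4) (Fin 4) ℂ) = -(1 : Matrix (Fin 4) (Fin 4) ℂ) from rfl,
        Matrix.det_neg]
      norm_num
    rw [h0, mul_zero] at h1
    exact zero_ne_one h1
  have hdetP : IsUnit P.det := by
    rw [isUnit_iff_ne_zero]
    intro h0
    apply hdJ
    have := congrArg Matrix.det hPAP
    rw [Matrix.det_mul, Matrix.det_mul, Matrix.det_transpose, h0] at this
    rw [← this]; ring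
  have hMA : (P * (-J4) * Pᵀ) * A = 1 := by
    have h1 : (P * (-J4) * Pᵀ) * A * P = P := by
      calc (P * (-J4) * Pᵀ) * A * P = P * (-J4) * (Pᵀ * A * P) := by
            simp only [Matrix.mul_assoc]
        _ = P * (-J4) * J4 := by rw [hPAP]
        _ = P * (-(J4 * J4)) := by rw [Matrix.mul_assoc, Matrix.neg_mul, Matrix.mul_neg]
        _ = P := by rw [hJJ, neg_neg, Matrix.mul_one]
    calc (P * (-J4) * Pᵀ) * A = ((P * (-J4) * Pᵀ) * A * P) * P⁻¹ := by
          rw [Matrix.mul_nonsing_inv_cancel_right _ _ hdetP]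
      _ = P * P⁻¹ := by rw [h1]
      _ = 1 := Matrix.mul_nonsing_inv _ hdetP
  have hBM : B = P * (-J4) * Pᵀ := by
    have h1 : A⁻¹ = P * (-J4) * Pᵀ := Matrix.inv_eq_left_inv hMA
    rw [← h1, hA, Matrix.nonsing_inv_nonsing_inv B hBdetU]
  clear_value w
  clear_value a
  refine ⟨a, u, w, ?_, ?_⟩
  · intro i j
    rw [hBM]
    simp only [Matrix.mul_apply, Matrix.transpose_apply, Fin.sum_univ_four, hJ4, hP,
      Matrix.of_apply, Matrix.neg_apply]
    norm_num [Matrix.cons_val_zero, Matrix.cons_val_one, Matrix.cons_val_two, Matrix.cons_val_three,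
      Matrix.vecHead, Matrix.vecTail]
    ring
  · intro v
    refine ⟨P⁻¹ *ᵥ v, ?_⟩
    intro j
    have hv : P *ᵥ (P⁻¹ *ᵥ v) = v := by
      rw [Matrix.mulVec_mulVec, Matrix.mul_nonsing_inv _ hdetP, Matrix.one_mulVec]
    conv_lhs => rw [← hv]
    simp only [Matrix.mulVec, dotProduct, Fin.sum_univ_four, hP, Matrix.of_apply]
    norm_num [Matrix.cons_val_zero, Matrix.cons_val_one, Matrix.cons_val_two, Matrix.cons_val_three,
      Matrix.vecHead, Matrix.vecTail]
    ring


/-- A nonlinear contact curve in `P³` is nondegenerate. -/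
theorem nonlinear_contact_curve_nondegenerate (B : Matrix (Fin 4) (Fin 4) ℂ)
    (halt : Bᵀ = -B) (hdet : B.det ≠ 0)
    (F : Fin 4 → ℂ[X]) (hcontact : IsContactCurve B F)
    (hspan : 3 ≤ Module.finrank ℂ ↥(Submodule.span ℂ (Set.range F))) :
    LinearIndependent ℂ F := by
  classical
  by_contra hdep
  obtain ⟨cf, hsum, i0, hi0⟩ := Fintype.not_linearIndependent_iff.mp hdep
  have hc : cf ≠ 0 := by intro h; rw [h] at hi0; exact hi0 rfl
  obtain ⟨a, u, w, hB, hcoord⟩ := exists_decomp B halt hdet cf hc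
  have hgc : gvec F cf = 0 := by
    rw [← hsum, gvec]
    exact Finset.sum_congr rfl fun i _ => (Polynomial.smul_eq_C_mul (cf i)).symm
  have hexp := contact_expand B F cf a u w hB
  have h0 : -(wronskian (gvec F cf) (gvec F a) + wronskian (gvec F u) (gvec F w)) = 0 := by
    rw [← hexp]; exact hcontact
  have hw0 : wronskian (gvec F u) (gvec F w) = 0 := by
    rw [hgc, wronskian_zero_left, zero_add, neg_eq_zero] at h0
    exact h0
  obtain ⟨s, t, hst, hrel⟩ := wronskian_zero_dep hw0
  obtain ⟨q, σu, σw, hqu, hqw⟩ : ∃ (q : ℂ[X]) (σu σw : ℂ),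
      gvec F u = C σu * q ∧ gvec F w = C σw * q := by
    rcases hst with hs | ht
    · refine ⟨gvec F w, -(t/s), 1, ?_, by simp⟩
      calc gvec F u = C (s⁻¹ * s) * gvec F u := by rw [inv_mul_cancel₀ hs, C_1, one_mul]
        _ = C s⁻¹ * (C s * gvec F u) := by rw [C_mul, mul_assoc]
        _ = C s⁻¹ * (-(C t * gvec F w)) := by rw [eq_neg_of_add_eq_zero_left hrel]
        _ = C (-(t/s)) * gvec F w := by
            rw [map_neg, div_eq_mul_inv, C_mul]; ring
    · refine ⟨gvec F u, 1, -(s/t), by simp, ?_⟩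
      calc gvec F w = C (t⁻¹ * t) * gvec F w := by rw [inv_mul_cancel₀ ht, C_1, one_mul]
        _ = C t⁻¹ * (C t * gvec F w) := by rw [C_mul, mul_assoc]
        _ = C t⁻¹ * (-(C s * gvec F u)) := by rw [eq_neg_of_add_eq_zero_right hrel]
        _ = C (-(s/t)) * gvec F u := by
            rw [map_neg, div_eq_mul_inv, C_mul]; ring
  set p : ℂ[X] := gvec F a with hp
  have hpm : p ∈ Submodule.span ℂ (Set.range ![p, q]) :=
    Submodule.subset_span ⟨0, rfl⟩
  have hqm : q ∈ Submodule.span ℂ (Set.range ![p, q]) :=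
    Submodule.subset_span ⟨1, rfl⟩
  have hmem : ∀ i, F i ∈ Submodule.span ℂ (Set.range ![p, q]) := by
    intro i
    obtain ⟨y, hy⟩ := hcoord (Pi.single i 1)
    have e1 : F i = C (y 0) * gvec F cf + C (y 1) * gvec F a +
        C (y 2) * gvec F u + C (y 3) * gvec F w := by
      have e0 : F i = ∑ j, C ((Pi.single i 1 : Fin 4 → ℂ) j) * F j := by
        rw [Fin.sum_univ_four]
        fin_cases i <;> simp
      rw [e0, Fin.sum_univ_four, hy 0, hy 1, hy 2, hy 3]
      simp only [gvec, Fin.sum_univ_four, C_add, C_mul]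
      ring
    rw [e1, hgc, hqu, hqw, mul_zero, zero_add, ← hp]
    refine Submodule.add_mem _ (Submodule.add_mem _ ?_ ?_) ?_
    · rw [← Polynomial.smul_eq_C_mul]; exact Submodule.smul_mem _ _ hpm
    · rw [← mul_assoc, ← C_mul, ← Polynomial.smul_eq_C_mul]
      exact Submodule.smul_mem _ _ hqm
    · rw [← mul_assoc, ← C_mul, ← Polynomial.smul_eq_C_mul]
      exact Submodule.smul_mem _ _ hqm
  have hle : Submodule.span ℂ (Set.range F) ≤ Submodule.span ℂ (Set.range ![p, q]) := by
    rw [Submodule.span_le]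
    rintro _ ⟨i, rfl⟩
    exact hmem i
  haveI : FiniteDimensional ℂ (Submodule.span ℂ (Set.range ![p, q])) :=
    FiniteDimensional.span_of_finite ℂ (Set.finite_range _)
  have h2 : Module.finrank ℂ (Submodule.span ℂ (Set.range ![p, q])) ≤ 2 := by
    refine le_trans (finrank_span_le_card _) ?_
    rw [Set.toFinset_range]
    exact le_trans Finset.card_image_le (by simp)
  have := le_trans hspan (le_trans (Submodule.finrank_mono hle) h2)
  omega
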